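/- Asymptotics of the infimal coercivity function: the function Υ(u) := inf_{λ ∈ [0,1)} [ ((1 − λ)/2)·u² + H_λ(u + 1/2) + H_λ(1/2 − u) ] satisfies Υ(u)/(u·log u) → 1 as u → +∞. -/

import Mathlib

/-- The regularized entropy `H_λ` (for `λ ∈ [0,1)`). -/
noncomputable def Hlam (lam c : ℝ) : ℝ :=
  if c ≤ (1 - lam) / 2 then c * Real.log ((1 - lam) / (1 + lam)) + lam
  else if c ≤ (1 + lam) / 2 then c * Real.log (2 * c / (1 + lam)) - c + (1 + lam) / 2
  else 0

/-- The infimal coercivity function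
`Υ(u) = inf_{λ ∈ [0,1)} [ ((1-λ)/2) u² + H_λ(u + 1/2) + H_λ(1/2 - u) ]`. -/
noncomputable def Ups (u : ℝ) : ℝ :=
  ⨅ lam : Set.Ico (0:ℝ) 1,
    ((1 - (lam : ℝ)) / 2 * u ^ 2 + Hlam lam (u + 1/2) + Hlam lam (1/2 - u))

lemma expr_eq (lam u : ℝ) (hl0 : 0 ≤ lam) (hl1 : lam < 1) (hu : 1 ≤ u) :
    (1 - lam) / 2 * u ^ 2 + Hlam lam (u + 1/2) + Hlam lam (1/2 - u)
      = (1 - lam) / 2 * u ^ 2 + (1/2 - u) * Real.log ((1 - lam) / (1 + lam)) + lam := by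
  have h1 : Hlam lam (u + 1/2) = 0 := by
    unfold Hlam
    rw [if_neg (by linarith), if_neg (by linarith)]
  have h2 : Hlam lam (1/2 - u) = (1/2 - u) * Real.log ((1 - lam) / (1 + lam)) + lam := by
    unfold Hlam
    rw [if_pos (by linarith)]
  rw [h1, h2]; ring

lemma lower_aux (lam u : ℝ) (hl0 : 0 ≤ lam) (hl1 : lam < 1) (hu : 2 ≤ u) :
    (u - 1/2) * (Real.log u - Real.log 2)
      ≤ (1 - lam) / 2 * u ^ 2 + (1/2 - u) * Real.log ((1 - lam) / (1 + lam)) + lam := by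
  have ht0 : 0 < 1 - lam := by linarith
  have ht1 : 0 < 1 + lam := by linarith
  have ha : (0:ℝ) < u - 1/2 := by linarith
  have hu0 : (0:ℝ) < u := by linarith
  have hlog : Real.log ((1 - lam) / (1 + lam)) = Real.log (1 - lam) - Real.log (1 + lam) :=
    Real.log_div ht0.ne' ht1.ne'
  have h2t : 0 ≤ Real.log (1 + lam) := Real.log_nonneg (by linarith)
  -- key : log((1-lam)*u/2) ≤ (1-lam)*u/2 - 1
  have key : Real.log ((1 - lam) * u / 2) ≤ (1 - lam) * u / 2 - 1 :=
    Real.log_le_sub_one_of_pos (by positivity)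
  have hsplit : Real.log ((1 - lam) * u / 2)
      = Real.log (1 - lam) + Real.log u - Real.log 2 := by
    rw [Real.log_div (by positivity) two_ne_zero, Real.log_mul ht0.ne' hu0.ne']
  rw [hsplit] at key
  -- multiply key by a = u - 1/2 > 0
  have key2 : (u - 1/2) * (Real.log (1 - lam) + Real.log u - Real.log 2)
      ≤ (u - 1/2) * ((1 - lam) * u / 2 - 1) :=
    mul_le_mul_of_nonneg_left key ha.le
  rw [hlog]
  have hq : (u - 1/2) * ((1 - lam) * u / 2) ≤ (1 - lam) / 2 * u ^ 2 := by nlinarith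
  nlinarith [mul_nonneg ha.le h2t]

lemma upper_aux (u : ℝ) (hu : 2 ≤ u) :
    (1 - (1 - 2/u)) / 2 * u ^ 2 + (1/2 - u) * Real.log ((1 - (1 - 2/u)) / (1 + (1 - 2/u)))
        + (1 - 2/u) ≤ u * Real.log u + u + 1 := by
  have hu0 : (0:ℝ) < u := by linarith
  have hu1 : (1:ℝ) < u - 1 + 1 := by linarith
  have h1 : (1 - (1 - 2/u)) / (1 + (1 - 2/u)) = (u - 1)⁻¹ := by
    have h2u : 2/u ≤ 1 := by rw [div_le_one hu0]; linarith
    rw [inv_eq_one_div, div_eq_div_iff (by intro h; nlinarith) (by intro h; nlinarith)]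
    field_simp
    ring
  have h2 : Real.log ((u - 1)⁻¹) = -Real.log (u - 1) := Real.log_inv _
  have hlog1 : 0 ≤ Real.log (u - 1) := Real.log_nonneg (by linarith)
  have hlog2 : Real.log (u - 1) ≤ Real.log u := Real.log_le_log (by linarith) (by linarith)
  have hsq : (1 - (1 - 2/u)) / 2 * u ^ 2 = u := by field_simp; ring
  rw [h1, h2, hsq]
  have hlogu : 0 ≤ Real.log u := Real.log_nonneg (by linarith)
  have : (1/2 - u) * -Real.log (u - 1) = (u - 1/2) * Real.log (u - 1) := by ring
  rw [this]
  have h3 : (u - 1/2) * Real.log (u - 1) ≤ u * Real.log u := by nlinarith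
  have h4 : 1 - 2/u ≤ 1 := by
    have : 0 ≤ 2/u := by positivity
    linarith
  linarith

lemma Ups_lower (u : ℝ) (hu : 2 ≤ u) :
    (u - 1/2) * (Real.log u - Real.log 2) ≤ Ups u := by
  apply le_ciInf
  rintro ⟨lam, hl0, hl1⟩
  rw [expr_eq lam u hl0 hl1 (by linarith)]
  exact lower_aux lam u hl0 hl1 hu

lemma Ups_upper (u : ℝ) (hu : 2 ≤ u) :
    Ups u ≤ u * Real.log u + u + 1 := by
  have hu0 : (0:ℝ) < u := by linarith
  have hmem : (1 - 2/u) ∈ Set.Ico (0:ℝ) 1 := by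
    constructor
    · have : 2/u ≤ 1 := by rw [div_le_one hu0]; linarith
      linarith
    · have : 0 < 2/u := by positivity
      linarith
  have hbdd : BddBelow (Set.range fun lam : Set.Ico (0:ℝ) 1 =>
      (1 - (lam : ℝ)) / 2 * u ^ 2 + Hlam lam (u + 1/2) + Hlam lam (1/2 - u)) := by
    refine ⟨(u - 1/2) * (Real.log u - Real.log 2), ?_⟩
    rintro x ⟨⟨lam, hl0, hl1⟩, rfl⟩
    dsimp only
    rw [expr_eq lam u hl0 hl1 (by linarith)]
    exact lower_aux lam u hl0 hl1 hu
  calc Ups u ≤ (1 - (1 - 2/u)) / 2 * u ^ 2 + Hlam (1 - 2/u) (u + 1/2)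
        + Hlam (1 - 2/u) (1/2 - u) := ciInf_le hbdd ⟨1 - 2/u, hmem⟩
    _ = (1 - (1 - 2/u)) / 2 * u ^ 2
        + (1/2 - u) * Real.log ((1 - (1 - 2/u)) / (1 + (1 - 2/u))) + (1 - 2/u) :=
      expr_eq _ u hmem.1 hmem.2 (by linarith)
    _ ≤ u * Real.log u + u + 1 := upper_aux u hu

/-- Asymptotics of the infimal coercivity function: `Υ(u) ∼ u log u` as `u → +∞`. -/
theorem Ups_asymptotics :
    Filter.Tendsto (fun u => Ups u / (u * Real.log u)) Filter.atTop (nhds 1) := by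
  have hmul : Filter.Tendsto (fun u : ℝ => u * Real.log u) Filter.atTop Filter.atTop :=
    Filter.tendsto_id.atTop_mul_atTop₀ Real.tendsto_log_atTop
  -- lower comparison function tends to 1
  have hlo : Filter.Tendsto
      (fun u : ℝ => (u - 1/2) * (Real.log u - Real.log 2) / (u * Real.log u))
      Filter.atTop (nhds 1) := by
    have h1 : Filter.Tendsto (fun u : ℝ => 1 / (2 * u)) Filter.atTop (nhds 0) :=
      Filter.Tendsto.div_atTop tendsto_const_nhds
        (Filter.Tendsto.const_mul_atTop two_pos Filter.tendsto_id)
    have h2 : Filter.Tendsto (fun u : ℝ => Real.log 2 / Real.log u) Filter.atTop (nhds 0) :=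
      Filter.Tendsto.div_atTop tendsto_const_nhds Real.tendsto_log_atTop
    have hc : Filter.Tendsto (fun _ : ℝ => (1:ℝ)) Filter.atTop (nhds 1) :=
      tendsto_const_nhds
    have h3 : Filter.Tendsto
        (fun u : ℝ => (1 - 1 / (2 * u)) * (1 - Real.log 2 / Real.log u))
        Filter.atTop (nhds 1) := by
      have := (hc.sub h1).mul (hc.sub h2)
      norm_num at this
      exact this.congr fun x => by ring
    refine h3.congr' ?_
    filter_upwards [Filter.eventually_ge_atTop (2:ℝ)] with u hu
    have hu0 : (0:ℝ) < u := by linarith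
    have hlogu : 0 < Real.log u := Real.log_pos (by linarith)
    field_simp
  -- upper comparison function tends to 1
  have hhi : Filter.Tendsto
      (fun u : ℝ => (u * Real.log u + u + 1) / (u * Real.log u))
      Filter.atTop (nhds 1) := by
    have h1 : Filter.Tendsto (fun u : ℝ => 1 / Real.log u) Filter.atTop (nhds 0) :=
      Filter.Tendsto.div_atTop tendsto_const_nhds Real.tendsto_log_atTop
    have h2 : Filter.Tendsto (fun u : ℝ => 1 / (u * Real.log u)) Filter.atTop (nhds 0) :=
      Filter.Tendsto.div_atTop tendsto_const_nhds hmul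
    have h3 : Filter.Tendsto
        (fun u : ℝ => 1 + 1 / Real.log u + 1 / (u * Real.log u))
        Filter.atTop (nhds 1) := by
      have hc : Filter.Tendsto (fun _ : ℝ => (1:ℝ)) Filter.atTop (nhds 1) :=
        tendsto_const_nhds
      have := (hc.add h1).add h2
      norm_num at this
      exact this.congr fun x => by ring
    refine h3.congr' ?_
    filter_upwards [Filter.eventually_ge_atTop (2:ℝ)] with u hu
    have hu0 : (0:ℝ) < u := by linarith
    have hlogu : 0 < Real.log u := Real.log_pos (by linarith)
    field_simp
  refine tendsto_of_tendsto_of_tendsto_of_le_of_le' hlo hhi ?_ ?_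
  · filter_upwards [Filter.eventually_ge_atTop (2:ℝ)] with u hu
    have hu0 : (0:ℝ) < u := by linarith
    have hlogu : 0 < Real.log u := Real.log_pos (by linarith)
    exact div_le_div_of_nonneg_right (Ups_lower u hu) (by positivity) |>.trans_eq rfl
  · filter_upwards [Filter.eventually_ge_atTop (2:ℝ)] with u hu
    have hu0 : (0:ℝ) < u := by linarith
    have hlogu : 0 < Real.log u := Real.log_pos (by linarith)
    exact div_le_div_of_nonneg_right (Ups_upper u hu) (by positivity)
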